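/- There exists n₀ such that for every integer n ≥ n₀, every prime Δ with 2 ≤ Δ ≤ n⁴, every set V of fewer than n² {0,1}-vectors in (ZMod Δ)ⁿ, and every integer k with √n ≤ k ≤ n, the number of {0,1}-vectors v ∈ (ZMod Δ)ⁿ for which there exists a subset W ⊆ V with 1 ≤ |W| ≤ ⌊k/(22·log₂ k)⌋ such that the restriction of v to its last k coordinates lies in the (ZMod Δ)-linear span of the restrictions of the vectors of W to their last k coordinates, is at most 2^(n − k/6). -/

import Mathlib

/-- The restriction of a vector `v ∈ (ZMod Δ)ⁿ` to its last `k` coordinates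
(coordinates `n-k, …, n-1`). -/
def lastCoords {α : Type*} (n k : ℕ) (hk : k ≤ n) (v : Fin n → α) : Fin k → α :=
  fun i => v ⟨n - k + i.1, by omega⟩

open Finset Classical in
lemma span_filter_card_le {K V : Type*} [Field K] [Fintype K] [AddCommGroup V] [Module K V]
    [Fintype V] [DecidableEq V] (s : Finset V) :
    (Finset.univ.filter (fun x : V => x ∈ Submodule.span K (s : Set V))).card
      ≤ Fintype.card K ^ s.card := by
  classical
  have h : Finset.univ.filter (fun x : V => x ∈ Submodule.span K (s : Set V)) ⊆
      Finset.image (fun c : ↥s → K => ∑ i ∈ s.attach, c i • (i : V)) Finset.univ := by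
    intro x hx
    simp only [Finset.mem_filter, Submodule.mem_span_finset] at hx
    obtain ⟨f, -, hf⟩ := hx.2
    refine Finset.mem_image.2 ⟨fun i => f i.1, Finset.mem_univ _, ?_⟩
    rw [← hf]
    exact Finset.sum_attach s (fun i => f i • i)
  calc (Finset.univ.filter (fun x : V => x ∈ Submodule.span K (s : Set V))).card
      ≤ (Finset.univ : Finset (↥s → K)).card := le_trans (Finset.card_le_card h) Finset.card_image_le
    _ = Fintype.card K ^ s.card := by
        rw [Finset.card_univ, Fintype.card_fun, Fintype.card_coe]

open Finset Classical in
lemma zeroOne_card_le {K : Type*} [Field K] [Fintype K] (j : ℕ) :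
    (Finset.univ.filter (fun f : Fin j → K => ∀ i, f i = 0 ∨ f i = 1)).card ≤ 2 ^ j := by
  classical
  have h : (Finset.univ.filter (fun f : Fin j → K => ∀ i, f i = 0 ∨ f i = 1)) ⊆
      Finset.image (fun g : Fin j → Bool => fun i => if g i then (1:K) else 0) Finset.univ := by
    intro f hf
    simp only [Finset.mem_filter] at hf
    refine Finset.mem_image.2 ⟨fun i => if f i = 1 then true else false, Finset.mem_univ _, ?_⟩
    funext i
    rcases hf.2 i with h0 | h1
    · by_cases hfi : f i = 1 <;> simp [hfi, h0]
    · simp [h1]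
  calc _ ≤ (Finset.univ : Finset (Fin j → Bool)).card :=
        le_trans (Finset.card_le_card h) Finset.card_image_le
    _ = 2 ^ j := by rw [Finset.card_univ, Fintype.card_fun]; simp

open Finset Classical in
lemma SW_card_le {Δ : ℕ} [Fact Δ.Prime] (n k : ℕ) (hk : k ≤ n)
    (W : Finset (Fin n → ZMod Δ)) :
    (Finset.univ.filter (fun v : Fin n → ZMod Δ => (∀ i, v i = 0 ∨ v i = 1) ∧
        lastCoords n k hk v ∈ Submodule.span (ZMod Δ)
          (lastCoords n k hk '' (W : Set (Fin n → ZMod Δ))))).card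
      ≤ 2 ^ (n - k) * Δ ^ W.card := by
  classical
  haveI : NeZero Δ := ⟨(Fact.out : Δ.Prime).ne_zero⟩
  set W' : Finset (Fin k → ZMod Δ) := W.image (lastCoords n k hk) with hW'
  set A : Finset (Fin (n-k) → ZMod Δ) :=
    Finset.univ.filter (fun f => ∀ i, f i = 0 ∨ f i = 1) with hA
  set B : Finset (Fin k → ZMod Δ) :=
    Finset.univ.filter (fun x => x ∈ Submodule.span (ZMod Δ) (W' : Set (Fin k → ZMod Δ))) with hB
  have hcoe : lastCoords n k hk '' (W : Set (Fin n → ZMod Δ)) =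
      (W' : Set (Fin k → ZMod Δ)) := by rw [hW', Finset.coe_image]
  have key : (Finset.univ.filter (fun v : Fin n → ZMod Δ => (∀ i, v i = 0 ∨ v i = 1) ∧
        lastCoords n k hk v ∈ Submodule.span (ZMod Δ)
          (lastCoords n k hk '' (W : Set (Fin n → ZMod Δ))))).card ≤ (A ×ˢ B).card := by
    apply Finset.card_le_card_of_injOn
      (fun v => (fun i : Fin (n-k) => v ⟨i.1, by omega⟩, lastCoords n k hk v))
    · intro v hv
      simp only [Finset.mem_coe, Finset.mem_filter, Finset.mem_univ, true_and] at hv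
      rw [Finset.mem_coe, Finset.mem_product]
      constructor
      · simp only [hA, Finset.mem_filter, Finset.mem_univ, true_and]
        exact fun i => hv.1 _
      · simp only [hB, Finset.mem_filter, Finset.mem_univ, true_and]
        rw [← hcoe]; exact hv.2
    · intro u _ v _ h
      simp only [Prod.mk.injEq] at h
      funext i
      by_cases hi : i.1 < n - k
      · have h1 := congrFun h.1 ⟨i.1, hi⟩
        have e : i = (⟨(⟨i.1, hi⟩ : Fin (n-k)).1, by omega⟩ : Fin n) := Fin.ext rfl
        rw [e]; exact h1
      · have h2 := congrFun h.2 ⟨i.1 - (n - k), by omega⟩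
        simp only [lastCoords] at h2
        have e : i = (⟨n - k + (i.1 - (n - k)), by omega⟩ : Fin n) := by
          apply Fin.ext; simp only [Fin.val_mk]; omega
        rw [e]; exact h2
  rw [Finset.card_product] at key
  refine le_trans key (Nat.mul_le_mul ?_ ?_)
  · rw [hA]
    have h0 := zeroOne_card_le (K := ZMod Δ) (n - k)
    convert h0 using 2
    ext f
    simp
  · calc B.card ≤ Fintype.card (ZMod Δ) ^ W'.card := span_filter_card_le W'
      _ = Δ ^ W'.card := by rw [ZMod.card]
      _ ≤ Δ ^ W.card := Nat.pow_le_pow_right (Fact.out : Δ.Prime).pos (Finset.card_image_le)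

set_option maxHeartbeats 1000000 in
theorem stmt3 :
    ∃ n₀ : ℕ, ∀ n : ℕ, n₀ ≤ n → ∀ Δ : ℕ, Δ.Prime → 2 ≤ Δ → (Δ : ℝ) ≤ (n : ℝ)^4 →
      ∀ V : Finset (Fin n → ZMod Δ),
        (∀ v ∈ V, ∀ i, v i = 0 ∨ v i = 1) →
        V.card < n^2 →
        ∀ k : ℕ, Real.sqrt n ≤ (k : ℝ) → ∀ hk : k ≤ n,
          ({v : Fin n → ZMod Δ | (∀ i, v i = 0 ∨ v i = 1) ∧
              ∃ W ⊆ V, 1 ≤ W.card ∧ W.card ≤ ⌊(k : ℝ) / (22 * Real.logb 2 k)⌋₊ ∧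
                lastCoords n k hk v ∈
                  Submodule.span (ZMod Δ)
                    (lastCoords n k hk '' (W : Set (Fin n → ZMod Δ)))}.ncard : ℝ)
            ≤ 2 ^ ((n : ℝ) - (k : ℝ) / 6) := by
  classical
  refine ⟨2^20, ?_⟩
  intro n hn Δ hΔ hΔ2 hΔn V hV01 hVcard k hkn hk
  haveI : Fact Δ.Prime := ⟨hΔ⟩
  haveI : NeZero Δ := ⟨hΔ.ne_zero⟩
  set m := ⌊(k : ℝ) / (22 * Real.logb 2 k)⌋₊ with hm
  set P : (Fin n → ZMod Δ) → Prop := fun v => (∀ i, v i = 0 ∨ v i = 1) ∧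
      ∃ W ⊆ V, 1 ≤ W.card ∧ W.card ≤ m ∧
        lastCoords n k hk v ∈ Submodule.span (ZMod Δ)
          (lastCoords n k hk '' (W : Set (Fin n → ZMod Δ))) with hP
  clear_value m
  -- pass to Finset cardinality
  have hset : ({v : Fin n → ZMod Δ | P v}).ncard = (Finset.univ.filter P).card := by
    rw [← Set.ncard_coe_finset]
    congr 1
    ext v
    simp
  -- basic numeric facts
  have hn1 : (1:ℕ) ≤ n := le_trans (by norm_num) hn
  have hk1024 : (1024:ℝ) ≤ (k:ℝ) := by
    have h1 : (1024:ℝ) = Real.sqrt (1024^2) := (Real.sqrt_sq (by norm_num)).symm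
    have h2 : ((1024:ℝ)^2) ≤ (n:ℝ) := by
      have : ((2^20 : ℕ) : ℝ) ≤ (n:ℝ) := by exact_mod_cast hn
      norm_num at this ⊢
      linarith
    calc (1024:ℝ) = Real.sqrt (1024^2) := h1
      _ ≤ Real.sqrt n := Real.sqrt_le_sqrt h2
      _ ≤ (k:ℝ) := hkn
  have hk0 : (0:ℝ) < (k:ℝ) := by linarith
  have hn0 : (0:ℝ) < (n:ℝ) := by exact_mod_cast Nat.lt_of_lt_of_le (by norm_num) hn
  -- the family of admissible W's
  set 𝒲 : Finset (Finset (Fin n → ZMod Δ)) :=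
    V.powerset.filter (fun W => 1 ≤ W.card ∧ W.card ≤ m) with h𝒲
  clear_value 𝒲
  -- Step B : counting in ℕ
  have hsubset : Finset.univ.filter P ⊆ 𝒲.biUnion (fun W =>
      Finset.univ.filter (fun v : Fin n → ZMod Δ => (∀ i, v i = 0 ∨ v i = 1) ∧
        lastCoords n k hk v ∈ Submodule.span (ZMod Δ)
          (lastCoords n k hk '' (W : Set (Fin n → ZMod Δ))))) := by
    intro v hv
    simp only [Finset.mem_filter, Finset.mem_univ, true_and, hP] at hv
    obtain ⟨h01, W, hWV, h1, h2, hspan⟩ := hv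
    refine Finset.mem_biUnion.2 ⟨W, ?_, ?_⟩
    · simp only [h𝒲, Finset.mem_filter, Finset.mem_powerset]
      exact ⟨hWV, h1, h2⟩
    · simp only [Finset.mem_filter, Finset.mem_univ, true_and]
      exact ⟨h01, hspan⟩
  have hWcard : 𝒲.card ≤ m * (V.card + 1)^m := by
    have hsub2 : 𝒲 ⊆ (Finset.Icc 1 m).biUnion (fun s => Finset.powersetCard s V) := by
      intro W hW
      simp only [h𝒲, Finset.mem_filter, Finset.mem_powerset] at hW
      refine Finset.mem_biUnion.2 ⟨W.card, Finset.mem_Icc.2 ⟨hW.2.1, hW.2.2⟩, ?_⟩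
      exact Finset.mem_powersetCard.2 ⟨hW.1, rfl⟩
    calc 𝒲.card ≤ ((Finset.Icc 1 m).biUnion (fun s => Finset.powersetCard s V)).card :=
          Finset.card_le_card hsub2
      _ ≤ ∑ s ∈ Finset.Icc 1 m, (Finset.powersetCard s V).card := Finset.card_biUnion_le
      _ ≤ ∑ s ∈ Finset.Icc 1 m, (V.card + 1)^m := by
          apply Finset.sum_le_sum
          intro s hs
          rw [Finset.card_powersetCard]
          calc V.card.choose s ≤ V.card ^ s := Nat.choose_le_pow _ _
            _ ≤ (V.card + 1) ^ s := Nat.pow_le_pow_left (Nat.le_succ _) _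
            _ ≤ (V.card + 1) ^ m := Nat.pow_le_pow_right (Nat.succ_pos _)
                (Finset.mem_Icc.1 hs).2
      _ = m * (V.card + 1)^m := by
          rw [Finset.sum_const, Nat.card_Icc]
          simp [Nat.smul_one_eq_cast]
  have hNat : (Finset.univ.filter P).card ≤ m * (V.card + 1)^m * (2^(n-k) * Δ^m) := by
    calc (Finset.univ.filter P).card
        ≤ (𝒲.biUnion (fun W =>
            Finset.univ.filter (fun v : Fin n → ZMod Δ => (∀ i, v i = 0 ∨ v i = 1) ∧
              lastCoords n k hk v ∈ Submodule.span (ZMod Δ)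
                (lastCoords n k hk '' (W : Set (Fin n → ZMod Δ)))))).card :=
          Finset.card_le_card hsubset
      _ ≤ ∑ W ∈ 𝒲, (Finset.univ.filter (fun v : Fin n → ZMod Δ =>
            (∀ i, v i = 0 ∨ v i = 1) ∧
              lastCoords n k hk v ∈ Submodule.span (ZMod Δ)
                (lastCoords n k hk '' (W : Set (Fin n → ZMod Δ))))).card :=
          Finset.card_biUnion_le
      _ ≤ 𝒲.card * (2^(n-k) * Δ^m) := by
          rw [← smul_eq_mul]
          apply Finset.sum_le_card_nsmul
          intro W hW
          have hWm : W.card ≤ m := by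
            simp only [h𝒲, Finset.mem_filter] at hW
            exact hW.2.2
          calc _ ≤ 2^(n-k) * Δ^W.card := SW_card_le n k hk W
            _ ≤ 2^(n-k) * Δ^m := Nat.mul_le_mul_left _ (Nat.pow_le_pow_right hΔ.pos hWm)
      _ ≤ m * (V.card + 1)^m * (2^(n-k) * Δ^m) := Nat.mul_le_mul_right _ hWcard
  -- Step C : real estimates
  rw [hset]
  have hV1 : ((V.card + 1 : ℕ) : ℝ) ≤ (n:ℝ)^2 := by
    have : V.card + 1 ≤ n^2 := hVcard
    exact_mod_cast this
  have h2nk : ((2:ℝ)^(n-k : ℕ)) = (2:ℝ) ^ ((n:ℝ) - (k:ℝ)) := by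
    rw [← Real.rpow_natCast 2 (n-k), Nat.cast_sub hk]
  have key : ((m:ℝ) * (n:ℝ)^(6*m)) ≤ (2:ℝ) ^ ((5/6:ℝ) * (k:ℝ)) := by
    rcases Nat.eq_zero_or_pos m with hm0 | hm1
    · rw [hm0]
      simp only [Nat.cast_zero, zero_mul]
      positivity
    · have hm1R : (1:ℝ) ≤ (m:ℝ) := by exact_mod_cast hm1
      have hLk : (10:ℝ) ≤ Real.logb 2 k := by
        have h10 : (10:ℝ) = Real.logb 2 1024 := by
          rw [show (1024:ℝ) = 2^(10:ℕ) by norm_num, Real.logb_pow,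
            Real.logb_self_eq_one (by norm_num : (1:ℝ) < 2)]
          norm_num
        rw [h10]
        exact Real.logb_le_logb_of_le (by norm_num) (by norm_num) hk1024
      have hmle : (m:ℝ) ≤ (k:ℝ) / (22 * Real.logb 2 k) := by
        rw [hm]; exact Nat.floor_le (by positivity)
      have hma : (m:ℝ) * Real.logb 2 k ≤ (k:ℝ)/22 := by
        have hL0 : (0:ℝ) < Real.logb 2 k := by linarith
        calc (m:ℝ) * Real.logb 2 k
            ≤ ((k:ℝ)/(22 * Real.logb 2 k)) * Real.logb 2 k :=
              mul_le_mul_of_nonneg_right hmle (le_of_lt hL0)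
          _ = (k:ℝ)/22 := by field_simp
      have hmk : (m:ℝ) ≤ (k:ℝ) := by nlinarith
      have hLn : Real.logb 2 n ≤ 2 * Real.logb 2 k := by
        have hnk2 : (n:ℝ) ≤ (k:ℝ)^2 := by
          have h1 : Real.sqrt n ^ 2 ≤ (k:ℝ)^2 :=
            pow_le_pow_left₀ (Real.sqrt_nonneg _) hkn 2
          rwa [Real.sq_sqrt (le_of_lt hn0)] at h1
        calc Real.logb 2 n ≤ Real.logb 2 ((k:ℝ)^2) :=
              Real.logb_le_logb_of_le (by norm_num) hn0 hnk2
          _ = 2 * Real.logb 2 k := by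
              rw [Real.logb_pow]; norm_num
      have hLksmall : Real.logb 2 k ≤ (19:ℝ)*(k:ℝ)/66 := by
        have hsk : (32:ℝ) ≤ Real.sqrt k := by
          have h32 : (32:ℝ) = Real.sqrt (32^2) := (Real.sqrt_sq (by norm_num)).symm
          rw [h32]
          exact Real.sqrt_le_sqrt (le_trans (by norm_num) hk1024)
        have hsq : Real.sqrt k ^ 2 = (k:ℝ) := Real.sq_sqrt (le_of_lt hk0)
        have hlogk : Real.log k ≤ 2 * Real.sqrt k := by
          have hls : Real.log (Real.sqrt k) = Real.log k / 2 := Real.log_sqrt (le_of_lt hk0)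
          have h2 := Real.log_le_sub_one_of_pos (show (0:ℝ) < Real.sqrt k by linarith)
          linarith
        have hlog2 : (0.6931471803:ℝ) < Real.log 2 := Real.log_two_gt_d9
        rw [Real.logb, div_le_iff₀ (by linarith)]
        nlinarith [Real.sqrt_nonneg (k:ℝ)]
      have hLHSpos : (0:ℝ) < (m:ℝ) * (n:ℝ)^(6*m) := by positivity
      rw [← Real.logb_le_iff_le_rpow (by norm_num) hLHSpos]
      rw [Real.logb_mul (by positivity) (by positivity), Real.logb_pow]
      have hlbm : Real.logb 2 m ≤ Real.logb 2 k :=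
        Real.logb_le_logb_of_le (by norm_num) (by linarith) hmk
      have h6 : 6*(m:ℝ) * Real.logb 2 n ≤ 12 * ((m:ℝ) * Real.logb 2 k) := by
        calc 6*(m:ℝ)*Real.logb 2 n ≤ 6*(m:ℝ)*(2*Real.logb 2 k) :=
              mul_le_mul_of_nonneg_left hLn (by positivity)
          _ = 12*((m:ℝ)*Real.logb 2 k) := by ring
      have hA : Real.logb 2 m ≤ 19*(k:ℝ)/66 := le_trans hlbm hLksmall
      push_cast
      linarith [hA, h6, hma]
  calc ((Finset.univ.filter P).card : ℝ)
      ≤ ((m * (V.card + 1)^m * (2^(n-k) * Δ^m) : ℕ) : ℝ) := by exact_mod_cast hNat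
    _ = (m:ℝ) * ((V.card + 1 : ℕ):ℝ)^m * ((2:ℝ)^(n-k:ℕ) * (Δ:ℝ)^m) := by push_cast; ring
    _ ≤ (m:ℝ) * ((n:ℝ)^2)^m * ((2:ℝ)^(n-k:ℕ) * ((n:ℝ)^4)^m) := by
        have hb1 : ((V.card + 1 : ℕ):ℝ)^m ≤ ((n:ℝ)^2)^m :=
          pow_le_pow_left₀ (Nat.cast_nonneg _) hV1 m
        have hb2 : ((Δ:ℕ):ℝ)^m ≤ ((n:ℝ)^4)^m :=
          pow_le_pow_left₀ (Nat.cast_nonneg _) hΔn m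
        apply mul_le_mul
        · exact mul_le_mul_of_nonneg_left hb1 (Nat.cast_nonneg m)
        · exact mul_le_mul_of_nonneg_left hb2 (by positivity)
        · positivity
        · positivity
    _ = ((m:ℝ) * (n:ℝ)^(6*m)) * (2:ℝ)^(n-k:ℕ) := by
        have h6 : (n:ℝ)^(6*m) = (n:ℝ)^(2*m) * (n:ℝ)^(4*m) := by
          rw [← pow_add]
          congr 1
          ring
        rw [← pow_mul, ← pow_mul, h6]
        ring
    _ ≤ (2:ℝ) ^ ((5/6:ℝ) * (k:ℝ)) * (2:ℝ) ^ ((n:ℝ) - (k:ℝ)) := by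
        rw [h2nk]
        exact mul_le_mul_of_nonneg_right key (by positivity)
    _ = (2:ℝ) ^ ((n:ℝ) - (k:ℝ)/6) := by
        rw [← Real.rpow_add (by norm_num)]
        congr 1
        ring
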